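/- Under the ADDA setup, for every k ≥ 0 the iterates X_k satisfy, in the Loewner order: 0 ≤ X_k ≤ X_{k+1} ≤ X, and moreover 0 ≤ X − X_k ≤ (I + X Y)·𝒞(S;α)^{2^k}·X·𝒞(R;α)^{2^k}. -/

import Mathlib

open Matrix Filter
open scoped Matrix.Norms.L2Operator

namespace ADDAAux
variable {n : ℕ}
local notation "M" => Matrix (Fin n) (Fin n) ℝ

lemma tps {A : M} (h : A.IsHermitian) : Aᵀ = A := by
  rw [← Matrix.conjTranspose_eq_transpose_of_trivial]; exact h

lemma miv {A : M} (h : IsUnit A) : A * A⁻¹ = 1 :=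
  Matrix.mul_nonsing_inv A ((Matrix.isUnit_iff_isUnit_det A).mp h)

lemma ivm {A : M} (h : IsUnit A) : A⁻¹ * A = 1 :=
  Matrix.nonsing_inv_mul A ((Matrix.isUnit_iff_isUnit_det A).mp h)

lemma micl {A : M} (h : IsUnit A) (B : M) : A * (A⁻¹ * B) = B :=
  Matrix.mul_nonsing_inv_cancel_left A B ((Matrix.isUnit_iff_isUnit_det A).mp h)

lemma ivcl {A : M} (h : IsUnit A) (B : M) : A⁻¹ * (A * B) = B :=
  Matrix.nonsing_inv_mul_cancel_left A B ((Matrix.isUnit_iff_isUnit_det A).mp h)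

lemma iut {A : M} (h : IsUnit A) : IsUnit Aᵀ := by
  rw [Matrix.isUnit_iff_isUnit_det] at h ⊢; rwa [Matrix.det_transpose]

lemma smul_psd {A : M} (h : A.PosSemidef) {c : ℝ} (hc : 0 ≤ c) : (c • A).PosSemidef := by
  constructor
  · unfold Matrix.IsHermitian
    rw [Matrix.conjTranspose_smul, star_trivial, h.1.eq]
  · exact (h.smul hc).2

lemma comm_inv {A B : M} (h1 : IsUnit (1 + A*B)) (h2 : IsUnit (1 + B*A)) :
    B * (1 + A*B)⁻¹ = (1 + B*A)⁻¹ * B := by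
  have key : (1 + B*A) * (B * (1+A*B)⁻¹) = B := by
    have e : (1 + B*A) * B = B * (1+A*B) := by noncomm_ring
    rw [← mul_assoc, e, mul_assoc, miv h1, mul_one]
  rw [← ivcl h2 (B * (1+A*B)⁻¹), key]

open scoped MatrixOrder in
lemma psd_mul_inv {P N : M} (hP : P.PosSemidef) (hN : N.PosSemidef) (hu : IsUnit (1 + N*P)) :
    (P * (1 + N*P)⁻¹).PosSemidef := by
  obtain ⟨L, hLpsd, hLh, hL⟩ : ∃ L : M, L.PosSemidef ∧ Lᴴ = L ∧ L * L = P :=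
    ⟨CFC.sqrt P, (CFC.sqrt_nonneg P).posSemidef, (CFC.sqrt_nonneg P).posSemidef.isHermitian.eq,
      CFC.sqrt_mul_sqrt_self P hP.nonneg⟩
  have hmid : (L * N * L).PosSemidef := by
    have := hN.conjTranspose_mul_mul_same L
    rwa [hLh] at this
  have hpd : (1 + L*N*L).PosDef := Matrix.PosDef.add_posSemidef Matrix.PosDef.one hmid
  have hu2 : IsUnit (1 + L*N*L) := hpd.isUnit
  have hu1' : IsUnit (1 + N*L*L) := by rwa [mul_assoc, hL]
  have hu2' : IsUnit (1 + L*(N*L)) := by rwa [← mul_assoc]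
  have swap : L * (1 + N*L*L)⁻¹ = (1 + L*(N*L))⁻¹ * L := comm_inv hu1' hu2'
  have e : P * (1 + N*P)⁻¹ = Lᴴ * (1+L*N*L)⁻¹ * L := by
    rw [← hL, show 1 + N*(L*L) = 1 + N*L*L from by rw [mul_assoc], mul_assoc, swap, hLh,
      ← mul_assoc, ← mul_assoc, mul_assoc L N L]
  rw [e]
  exact (hpd.inv.posSemidef).conjTranspose_mul_mul_same L

lemma conjpsd {P : M} (hP : P.PosSemidef) (E : M) : (Eᵀ*P*E).PosSemidef := by
  rw [show Eᵀ = Eᴴ from (Matrix.conjTranspose_eq_transpose_of_trivial E).symm]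
  exact hP.conjTranspose_mul_mul_same E

lemma sandwich {P Xm : M} (hXmt : Xmᵀ = Xm) (hP : P.PosSemidef) : (Xm*P*Xm).PosSemidef := by
  have := hP.conjTranspose_mul_mul_same Xm
  rwa [Matrix.conjTranspose_eq_transpose_of_trivial, hXmt] at this

lemma pcomm {E F K : M} (h : Eᵀ*K = K*F) (m : ℕ) : (E^m)ᵀ*K = K*F^m := by
  induction m with
  | zero => simp
  | succ m ih =>
    rw [pow_succ, Matrix.transpose_mul, mul_assoc, ih, ← mul_assoc, h, mul_assoc, ← pow_succ']

lemma errform {Xm Xk Yk Ak E : M} (hXmt : Xmᵀ = Xm) (hYkt : Ykᵀ = Yk)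
    (hI1 : Ak = (1+Yk*Xm)*E) (hI2 : Xm - Xk = Akᵀ*Xm*E) :
    Xm - Xk = Eᵀ*(Xm + Xm*Yk*Xm)*E := by
  rw [hI2, hI1, Matrix.transpose_mul, Matrix.transpose_add, Matrix.transpose_one,
    Matrix.transpose_mul, hYkt, hXmt]
  noncomm_ring

lemma step (X Xk Yk Ak E : M)
    (hu1 : IsUnit (1 + Yk*Xk)) (hu2 : IsUnit (1 + Xk*Yk))
    (hI1 : Ak = (1 + Yk*X)*E) (hI2 : X - Xk = Akᵀ*X*E) :
    Ak*(1+Yk*Xk)⁻¹*Ak = (1 + (Yk + Ak*Yk*(1+Xk*Yk)⁻¹*Akᵀ)*X)*(E*E) ∧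
    X - (Xk + Akᵀ*(1+Xk*Yk)⁻¹*Xk*Ak) = Akᵀ*(1+Xk*Yk)⁻¹*Akᵀ*X*(E*E) := by
  set J := (1+Xk*Yk)⁻¹ with hJ
  set K := (1+Yk*Xk)⁻¹ with hK
  have hc : Yk*J = K*Yk := comm_inv hu2 hu1
  have hf2 : Akᵀ*X*E = X - Xk := hI2.symm
  have f1 : K*(1+Yk*X) = 1 + Yk*(J*(X-Xk)) := by
    have h' : (1+Yk*Xk)*(1 + Yk*(J*(X-Xk))) = 1+Yk*X := by
      rw [show Yk*(J*(X-Xk)) = (Yk*J)*(X-Xk) from (mul_assoc _ _ _).symm, hc,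
        show (K*Yk)*(X-Xk) = K*(Yk*(X-Xk)) from mul_assoc _ _ _]
      rw [mul_add, mul_one, hK, micl hu1]
      noncomm_ring
    rw [← h', hK, ← mul_assoc, ivm hu1, one_mul]
  constructor
  · calc Ak*K*Ak = Ak*(K*(1+Yk*X))*E := by rw [hI1]; noncomm_ring
    _ = Ak*(1 + Yk*(J*(X-Xk)))*E := by rw [f1]
    _ = Ak*E + Ak*Yk*J*((X-Xk)*E) := by noncomm_ring
    _ = Ak*E + Ak*Yk*J*((Akᵀ*X*E)*E) := by rw [hf2]
    _ = (1 + (Yk + Ak*Yk*J*Akᵀ)*X)*(E*E) := by rw [hI1]; noncomm_ring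
  · have g2 : (1+Xk*Yk)*(X*E) - Xk*Ak = (X-Xk)*E := by rw [hI1]; noncomm_ring
    calc X - (Xk + Akᵀ*J*Xk*Ak) = (Akᵀ*X*E) - Akᵀ*J*Xk*Ak := by rw [hf2]; noncomm_ring
    _ = Akᵀ*(J*((1+Xk*Yk)*(X*E))) - Akᵀ*J*Xk*Ak := by rw [hJ, ivcl hu2 (X*E)]; noncomm_ring
    _ = Akᵀ*J*((1+Xk*Yk)*(X*E) - Xk*Ak) := by noncomm_ring
    _ = Akᵀ*J*((X-Xk)*E) := by rw [g2]
    _ = Akᵀ*J*((Akᵀ*X*E)*E) := by rw [hf2]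
    _ = Akᵀ*J*Akᵀ*X*(E*E) := by noncomm_ring

lemma base (A G Q X : M) (α : ℝ)
    (Aα Uα Vα : M) (hAα : Aα = A - α•1)
    (hUα : Uα = Aαᵀ + Q*Aα⁻¹*G) (hVα : Vα = Aα + G*(Aαᵀ)⁻¹*Q)
    (hAαu : IsUnit Aα) (hUαu : IsUnit Uα) (hVαu : IsUnit Vα)
    (hCARE : Aᵀ*X + X*A + Q - X*G*X = 0)
    (hRu : IsUnit (A - G*X - α•1)) :
    1 + (2*α)•Vα⁻¹ = (1 + ((2*α)•(Aα⁻¹*G*Uα⁻¹))*X) * ((A-G*X+α•1)*(A-G*X-α•1)⁻¹) ∧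
    X - (2*α)•(Uα⁻¹*Q*Aα⁻¹) = (1 + (2*α)•Uα⁻¹) * X * ((A-G*X+α•1)*(A-G*X-α•1)⁻¹) := by
  have hAαtu : IsUnit Aαᵀ := iut hAαu
  have hW : A - G*X - α•1 = Aα - G*X := by rw [hAα]; abel
  have hW2 : A - G*X + α•1 = (Aα - G*X) + (2*α)•1 := by rw [hAα]; module
  have hWu : IsUnit (Aα - G*X) := hW ▸ hRu
  have hC2 : Aαᵀ*X + X*Aα + Q + (2*α)•X - X*G*X = 0 := by
    have e : Aαᵀ*X + X*Aα + Q + (2*α)•X - X*G*X = Aᵀ*X + X*A + Q - X*G*X := by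
      rw [hAα, Matrix.transpose_sub, Matrix.transpose_smul, Matrix.transpose_one]
      simp only [sub_mul, mul_sub, smul_mul_assoc, mul_smul_comm, one_mul, mul_one]
      module
    rw [e, hCARE]
  have hXAα : X*Aα = X*G*X - Aαᵀ*X - Q - (2*α)•X := by
    have e : X*Aα - (X*G*X - Aαᵀ*X - Q - (2*α)•X) =
        Aαᵀ*X + X*Aα + Q + (2*α)•X - X*G*X := by module
    exact sub_eq_zero.mp (e.trans hC2)
  have hGU : G*((Aαᵀ)⁻¹*Uα) = Vα*(Aα⁻¹*G) := by
    rw [hUα, hVα, mul_add ((Aαᵀ)⁻¹), ivm hAαtu, add_mul,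
      show Aα*(Aα⁻¹*G) = G from micl hAαu G]
    noncomm_ring
  have hQV : Q*(Aα⁻¹*Vα) = Uα*((Aαᵀ)⁻¹*Q) := by
    rw [hUα, hVα, mul_add Aα⁻¹, ivm hAαu, add_mul,
      show Aαᵀ*((Aαᵀ)⁻¹*Q) = Q from micl hAαtu Q]
    noncomm_ring
  have Y0eq : Aα⁻¹*G*Uα⁻¹ = Vα⁻¹*G*Aαᵀ⁻¹ := by
    have h1 := congrArg (fun Z => Vα⁻¹ * Z * Uα⁻¹) hGU
    rw [show Vα⁻¹*(Vα*(Aα⁻¹*G))*Uα⁻¹ = (Aα⁻¹*G)*Uα⁻¹ from by rw [ivcl hVαu],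
      show Vα⁻¹*(G*((Aαᵀ)⁻¹*Uα))*Uα⁻¹ = Vα⁻¹*G*(Aαᵀ)⁻¹*(Uα*Uα⁻¹) from by noncomm_ring,
      miv hUαu, mul_one] at h1
    exact h1.symm
  have X0eq : Uα⁻¹*Q*Aα⁻¹ = Aαᵀ⁻¹*Q*Vα⁻¹ := by
    have h1 := congrArg (fun Z => Uα⁻¹ * Z * Vα⁻¹) hQV
    rw [show Uα⁻¹*(Uα*((Aαᵀ)⁻¹*Q))*Vα⁻¹ = (Aαᵀ)⁻¹*Q*Vα⁻¹ from by rw [ivcl hUαu],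
      show Uα⁻¹*(Q*(Aα⁻¹*Vα))*Vα⁻¹ = Uα⁻¹*Q*Aα⁻¹*(Vα*Vα⁻¹) from by noncomm_ring,
      miv hVαu, mul_one] at h1
    exact h1
  have claim1 : (1 - G*((Aαᵀ)⁻¹*X))*(Aα - G*X) = Vα + (2*α)•(G*(Aαᵀ⁻¹*X)) := by
    have e1 : (1 - G*((Aαᵀ)⁻¹*X))*(Aα - G*X)
        = Aα - G*X - G*((Aαᵀ)⁻¹*(X*Aα)) + G*((Aαᵀ)⁻¹*(X*(G*X))) := by noncomm_ring
    rw [e1, hXAα, hVα]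
    simp only [mul_sub, sub_mul, mul_add, add_mul, mul_smul_comm, smul_mul_assoc]
    rw [ivcl hAαtu X]
    simp only [← mul_assoc]
    module
  have b2 : (Vα⁻¹*(1 - G*((Aαᵀ)⁻¹*X)))*(Aα - G*X) = 1 + ((2*α)•(Aα⁻¹*G*Uα⁻¹))*X := by
    rw [mul_assoc, claim1, mul_add, ivm hVαu]
    simp only [mul_smul_comm, smul_mul_assoc, ← mul_assoc]
    rw [Y0eq]
  have b1 : (Vα⁻¹*(1 - G*((Aαᵀ)⁻¹*X)))*((Aα - G*X) + (2*α)•1) = 1 + (2*α)•Vα⁻¹ := by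
    rw [mul_add, b2, Y0eq]
    simp only [mul_sub, sub_mul, mul_add, add_mul, mul_smul_comm, smul_mul_assoc,
      mul_one, one_mul]
    simp only [← mul_assoc]
    module
  have claim2 : (Q*Aα⁻¹ + X)*(Aα - G*X) = -(Uα*X) - (2*α)•X := by
    have e1 : (Q*Aα⁻¹ + X)*(Aα - G*X)
        = Q*(Aα⁻¹*Aα) - Q*Aα⁻¹*G*X + X*Aα - X*(G*X) := by noncomm_ring
    rw [e1, ivm hAαu, mul_one, hXAα, hUα, add_mul]
    simp only [← mul_assoc]
    module
  have b4 : (-(Uα⁻¹*(Q*Aα⁻¹ + X)))*(Aα - G*X) = (1 + (2*α)•Uα⁻¹)*X := by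
    rw [show (-(Uα⁻¹*(Q*Aα⁻¹ + X)))*(Aα - G*X) = -(Uα⁻¹*((Q*Aα⁻¹ + X)*(Aα - G*X)))
      from by noncomm_ring, claim2]
    simp only [mul_sub, mul_neg, neg_sub, neg_neg, mul_smul_comm]
    rw [ivcl hUαu]
    simp only [add_mul, one_mul, smul_mul_assoc, ← mul_assoc]
    module
  have b3 : (-(Uα⁻¹*(Q*Aα⁻¹ + X)))*((Aα - G*X) + (2*α)•1) = X - (2*α)•(Uα⁻¹*Q*Aα⁻¹) := by
    rw [mul_add, b4]
    simp only [mul_sub, sub_mul, mul_add, add_mul, mul_neg, neg_mul, mul_smul_comm,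
      smul_mul_assoc, mul_one, one_mul]
    simp only [← mul_assoc]
    module
  have cay : ∀ P : M, (P*(Aα-G*X))*((A-G*X+α•1)*(A-G*X-α•1)⁻¹)
      = P*((Aα-G*X)+(2*α)•1) := by
    intro P
    rw [hW, hW2]
    have comm : (Aα-G*X)*((Aα-G*X) + (2*α)•1) = ((Aα-G*X) + (2*α)•1)*(Aα-G*X) := by
      simp only [add_mul, mul_add, smul_mul_assoc, mul_smul_comm, one_mul, mul_one]
    calc (P*(Aα-G*X))*(((Aα-G*X)+(2*α)•1)*(Aα-G*X)⁻¹)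
        = P*((Aα-G*X)*((Aα-G*X)+(2*α)•1))*(Aα-G*X)⁻¹ := by simp only [mul_assoc]
      _ = P*(((Aα-G*X)+(2*α)•1)*(Aα-G*X))*(Aα-G*X)⁻¹ := by rw [comm]
      _ = P*((Aα-G*X)+(2*α)•1)*((Aα-G*X)*(Aα-G*X)⁻¹) := by simp only [mul_assoc]
      _ = P*((Aα-G*X)+(2*α)•1) := by rw [miv hWu, mul_one]
  constructor
  · rw [← b2, cay, b1]
  · rw [← b4, cay, b3]

lemma xyeq (G Q Aα Uα Vα : M)
    (hUα : Uα = Aαᵀ + Q*Aα⁻¹*G) (hVα : Vα = Aα + G*(Aαᵀ)⁻¹*Q)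
    (hAαu : IsUnit Aα) (hUαu : IsUnit Uα) (hVαu : IsUnit Vα) :
    Aα⁻¹*G*Uα⁻¹ = Vα⁻¹*G*Aαᵀ⁻¹ := by
  have hAαtu : IsUnit Aαᵀ := iut hAαu
  have hGU : G*((Aαᵀ)⁻¹*Uα) = Vα*(Aα⁻¹*G) := by
    rw [hUα, hVα, mul_add ((Aαᵀ)⁻¹), ivm hAαtu, add_mul,
      show Aα*(Aα⁻¹*G) = G from micl hAαu G]
    noncomm_ring
  have h1 := congrArg (fun Z => Vα⁻¹ * Z * Uα⁻¹) hGU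
  rw [show Vα⁻¹*(Vα*(Aα⁻¹*G))*Uα⁻¹ = (Aα⁻¹*G)*Uα⁻¹ from by rw [ivcl hVαu],
    show Vα⁻¹*(G*((Aαᵀ)⁻¹*Uα))*Uα⁻¹ = Vα⁻¹*G*(Aαᵀ)⁻¹*(Uα*Uα⁻¹) from by noncomm_ring,
    miv hUαu, mul_one] at h1
  exact h1.symm

lemma psd0 (G Q Aα Uα : M) (α : ℝ) (hα : 0 ≤ 2*α)
    (hGpsd : G.PosSemidef) (hQpsd : Q.PosSemidef)
    (hUα : Uα = Aαᵀ + Q*Aα⁻¹*G) (hAαu : IsUnit Aα) (hUαu : IsUnit Uα) :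
    ((2*α)•(Aα⁻¹*G*Uα⁻¹)).PosSemidef := by
  have hAαtu : IsUnit Aαᵀ := iut hAαu
  have hct : (Aα⁻¹)ᴴ = Aαᵀ⁻¹ := by
    rw [Matrix.conjTranspose_eq_transpose_of_trivial, Matrix.transpose_nonsing_inv]
  have hPps : (Aα⁻¹*G*Aαᵀ⁻¹).PosSemidef := by
    have := hGpsd.mul_mul_conjTranspose_same Aα⁻¹
    rwa [hct] at this
  have hfact : Uα = (1 + Q*(Aα⁻¹*G*Aαᵀ⁻¹))*Aαᵀ := by
    rw [hUα]
    simp only [add_mul, one_mul, mul_assoc]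
    rw [ivm hAαtu]
    simp only [mul_one]
  have hup : IsUnit (1 + Q*(Aα⁻¹*G*Aαᵀ⁻¹)) := by
    have e : 1 + Q*(Aα⁻¹*G*Aαᵀ⁻¹) = Uα * Aαᵀ⁻¹ := by
      rw [hfact, mul_assoc (1 + Q*(Aα⁻¹*G*Aαᵀ⁻¹)) Aαᵀ, miv hAαtu, mul_one]
    rw [e]
    exact hUαu.mul (Matrix.isUnit_nonsing_inv_iff.mpr hAαtu)
  have heq : Aα⁻¹*G*Uα⁻¹ = (Aα⁻¹*G*Aαᵀ⁻¹)*(1 + Q*(Aα⁻¹*G*Aαᵀ⁻¹))⁻¹ := by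
    rw [hfact, Matrix.mul_inv_rev]
    simp only [← mul_assoc]
  rw [heq]
  exact smul_psd (psd_mul_inv hPps hQpsd hup) hα

end ADDAAux

open ADDAAux in
theorem stmt_6 (n m p : ℕ)
    (A G Q : Matrix (Fin n) (Fin n) ℝ)
    (B : Matrix (Fin n) (Fin m) ℝ) (C : Matrix (Fin p) (Fin n) ℝ)
    (hG : G = B * Bᵀ) (hQ : Q = Cᵀ * C)
    (α : ℝ) (hα : 0 < α)
    (Aα Uα Vα : Matrix (Fin n) (Fin n) ℝ)
    (hAα : Aα = A - α • 1)
    (hUα : Uα = Aαᵀ + Q * Aα⁻¹ * G)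
    (hVα : Vα = Aα + G * (Aαᵀ)⁻¹ * Q)
    (hAαu : IsUnit Aα) (hUαu : IsUnit Uα) (hVαu : IsUnit Vα)
    (X Y : Matrix (Fin n) (Fin n) ℝ)
    (hXpsd : X.PosSemidef) (hYpsd : Y.PosSemidef)
    (hCARE : Aᵀ * X + X * A + Q - X * G * X = 0)
    (hDUAL : A * Y + Y * Aᵀ - Y * Q * Y + G = 0)
    (R S : Matrix (Fin n) (Fin n) ℝ)
    (hR : R = A - G * X) (hS : S = Aᵀ - Q * Y)
    (hRu : IsUnit (R - α • 1)) (hSu : IsUnit (S - α • 1))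
    (CR CS : Matrix (Fin n) (Fin n) ℝ)
    (hCR : CR = (R + α • 1) * (R - α • 1)⁻¹)
    (hCS : CS = (S + α • 1) * (S - α • 1)⁻¹)
    (Ahat Xs Ys : ℕ → Matrix (Fin n) (Fin n) ℝ)
    (hA0 : Ahat 0 = 1 + (2 * α) • Vα⁻¹)
    (hX0 : Xs 0 = (2 * α) • (Uα⁻¹ * Q * Aα⁻¹))
    (hY0 : Ys 0 = (2 * α) • (Aα⁻¹ * G * Uα⁻¹))
    (hu1 : ∀ k, IsUnit (1 + Ys k * Xs k))
    (hu2 : ∀ k, IsUnit (1 + Xs k * Ys k))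
    (hArec : ∀ k, Ahat (k + 1) = Ahat k * (1 + Ys k * Xs k)⁻¹ * Ahat k)
    (hXrec : ∀ k, Xs (k + 1) = Xs k + (Ahat k)ᵀ * (1 + Xs k * Ys k)⁻¹ * Xs k * Ahat k)
    (hYrec : ∀ k, Ys (k + 1) = Ys k + Ahat k * Ys k * (1 + Xs k * Ys k)⁻¹ * (Ahat k)ᵀ) :
    ∀ k, (Xs k).PosSemidef ∧ (Xs (k + 1) - Xs k).PosSemidef ∧
      (X - Xs (k + 1)).PosSemidef ∧ (X - Xs k).PosSemidef ∧
      ((1 + X * Y) * CS ^ (2 ^ k) * X * CR ^ (2 ^ k) - (X - Xs k)).PosSemidef := by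
  -- basic symmetry facts
  have hGs : Gᵀ = G := by rw [hG, Matrix.transpose_mul, Matrix.transpose_transpose]
  have hQs : Qᵀ = Q := by rw [hQ, Matrix.transpose_mul, Matrix.transpose_transpose]
  have hXsy : Xᵀ = X := tps hXpsd.isHermitian
  have hYsy : Yᵀ = Y := tps hYpsd.isHermitian
  have hGpsd : G.PosSemidef := by
    rw [hG, show Bᵀ = Bᴴ from (Matrix.conjTranspose_eq_transpose_of_trivial B).symm]
    exact Matrix.posSemidef_self_mul_conjTranspose B
  have hQpsd : Q.PosSemidef := by
    rw [hQ, show Cᵀ = Cᴴ from (Matrix.conjTranspose_eq_transpose_of_trivial C).symm]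
    exact Matrix.posSemidef_conjTranspose_mul_self C
  have hAαt : Aαᵀ = Aᵀ - α•1 := by
    rw [hAα, Matrix.transpose_sub, Matrix.transpose_smul, Matrix.transpose_one]
  have hAαtu : IsUnit Aαᵀ := iut hAαu
  have hVU : Vαᵀ = Uα := by
    rw [hVα, hUα, Matrix.transpose_add, Matrix.transpose_mul, Matrix.transpose_mul, hQs,
      ← Matrix.transpose_nonsing_inv, Matrix.transpose_transpose, hGs, mul_assoc]
  have hUV : Uαᵀ = Vα := by rw [← hVU, Matrix.transpose_transpose]
  have hUαd : Vα = (Aαᵀ)ᵀ + G * (Aαᵀ)⁻¹ * Q := by rw [Matrix.transpose_transpose]; exact hVα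
  have hVαd : Uα = Aαᵀ + Q * ((Aαᵀ)ᵀ)⁻¹ * G := by rw [Matrix.transpose_transpose]; exact hUα
  have X0eq : Uα⁻¹*Q*Aα⁻¹ = Aαᵀ⁻¹*Q*Vα⁻¹ := by
    have h := xyeq Q G Aαᵀ Vα Uα hUαd hVαd hAαtu hVαu hUαu
    rw [Matrix.transpose_transpose] at h
    exact h.symm
  have Y0eq : Aα⁻¹*G*Uα⁻¹ = Vα⁻¹*G*Aαᵀ⁻¹ :=
    xyeq G Q Aα Uα Vα hUα hVα hAαu hUαu hVαu
  have hA0t : (Ahat 0)ᵀ = 1 + (2*α)•Uα⁻¹ := by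
    rw [hA0, Matrix.transpose_add, Matrix.transpose_one, Matrix.transpose_smul,
      Matrix.transpose_nonsing_inv, hVU]
  have hCAREd : (Aᵀ)ᵀ*Y + Y*Aᵀ + G - Y*Q*Y = 0 := by
    rw [Matrix.transpose_transpose,
      show A*Y + Y*Aᵀ + G - Y*Q*Y = A*Y + Y*Aᵀ - Y*Q*Y + G from by abel]
    exact hDUAL
  have hRu' : IsUnit (A - G*X - α•1) := by rwa [hR] at hRu
  have hSu' : IsUnit (Aᵀ - Q*Y - α•1) := by rwa [hS] at hSu
  -- base case identities
  obtain ⟨c1, c2⟩ := base A G Q X α Aα Uα Vα hAα hUα hVα hAαu hUαu hVαu hCARE hRu'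
  obtain ⟨d1, d2⟩ := base Aᵀ Q G Y α Aαᵀ Vα Uα hAαt hUαd hVαd hAαtu hVαu hUαu hCAREd hSu'
  have hCRR : CR = (A-G*X+α•1)*(A-G*X-α•1)⁻¹ := by rw [hCR, hR]
  have hCSS : CS = (Aᵀ-Q*Y+α•1)*(Aᵀ-Q*Y-α•1)⁻¹ := by rw [hCS, hS]
  have i1_0 : Ahat 0 = (1 + Ys 0 * X) * CR := by rw [hA0, hY0, hCRR]; exact c1
  have i2_0 : X - Xs 0 = (Ahat 0)ᵀ * X * CR := by rw [hX0, hA0t, hCRR]; exact c2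
  have i3_0 : (Ahat 0)ᵀ = (1 + Xs 0 * Y) * CS := by
    rw [hA0t, hX0, hCSS, X0eq]; exact d1
  have i4_0 : Y - Ys 0 = Ahat 0 * Y * CS := by
    rw [hY0, hA0, hCSS, Y0eq]
    exact d2
  have pX0 : (Xs 0).PosSemidef := by
    rw [hX0, X0eq]
    exact psd0 Q G Aαᵀ Vα α (by positivity) hQpsd hGpsd hUαd hAαtu hVαu
  have pY0 : (Ys 0).PosSemidef := by
    rw [hY0]
    exact psd0 G Q Aα Uα α (by positivity) hGpsd hQpsd hUα hAαu hUαu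
  -- the invariant
  have inv : ∀ k, (Xs k).PosSemidef ∧ (Ys k).PosSemidef ∧
      Ahat k = (1 + Ys k * X) * CR^(2^k) ∧
      (Ahat k)ᵀ = (1 + Xs k * Y) * CS^(2^k) ∧
      X - Xs k = (Ahat k)ᵀ * X * CR^(2^k) ∧
      Y - Ys k = Ahat k * Y * CS^(2^k) := by
    intro k
    induction k with
    | zero =>
      simpa only [pow_zero, pow_one] using ⟨pX0, pY0, i1_0, i3_0, i2_0, i4_0⟩
    | succ k ih =>
      obtain ⟨pXk, pYk, i1, i3, i2, i4⟩ := ih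
      have hXkt : (Xs k)ᵀ = Xs k := tps pXk.isHermitian
      have hYkt : (Ys k)ᵀ = Ys k := tps pYk.isHermitian
      have hEk2 : CR^(2^(k+1)) = CR^(2^k)*CR^(2^k) := by rw [pow_succ, pow_mul, sq]
      have hFk2 : CS^(2^(k+1)) = CS^(2^k)*CS^(2^k) := by rw [pow_succ, pow_mul, sq]
      have hci : (1 + Xs k * Ys k)⁻¹ * Xs k = Xs k * (1 + Ys k * Xs k)⁻¹ :=
        (comm_inv (hu1 k) (hu2 k)).symm
      have hci2 : Ys k * (1 + Xs k * Ys k)⁻¹ = (1 + Ys k * Xs k)⁻¹ * Ys k :=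
        comm_inv (hu2 k) (hu1 k)
      have hJt : ((1 + Ys k * Xs k)⁻¹)ᵀ = (1 + Xs k * Ys k)⁻¹ := by
        rw [Matrix.transpose_nonsing_inv, Matrix.transpose_add, Matrix.transpose_one,
          Matrix.transpose_mul, hXkt, hYkt]
      have hJt2 : ((1 + Xs k * Ys k)⁻¹)ᵀ = (1 + Ys k * Xs k)⁻¹ := by
        rw [Matrix.transpose_nonsing_inv, Matrix.transpose_add, Matrix.transpose_one,
          Matrix.transpose_mul, hXkt, hYkt]
      have hAt1 : (Ahat (k+1))ᵀ = (Ahat k)ᵀ * (1 + Xs k * Ys k)⁻¹ * (Ahat k)ᵀ := by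
        rw [hArec, Matrix.transpose_mul, Matrix.transpose_mul, hJt, ← mul_assoc]
      obtain ⟨s1, s2⟩ := step X (Xs k) (Ys k) (Ahat k) (CR^(2^k)) (hu1 k) (hu2 k) i1 i2
      obtain ⟨t1, t2⟩ := step Y (Ys k) (Xs k) ((Ahat k)ᵀ) (CS^(2^k)) (hu2 k) (hu1 k) i3
        (by rwa [Matrix.transpose_transpose])
      -- increments are psd
      have incX : ((Ahat k)ᵀ * (1 + Xs k * Ys k)⁻¹ * Xs k * Ahat k).PosSemidef := by
        have e : (Ahat k)ᵀ * (1 + Xs k * Ys k)⁻¹ * Xs k * Ahat k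
            = (Ahat k)ᴴ * (Xs k * (1 + Ys k * Xs k)⁻¹) * Ahat k := by
          rw [Matrix.conjTranspose_eq_transpose_of_trivial, mul_assoc ((Ahat k)ᵀ), hci]
        rw [e]
        exact (psd_mul_inv pXk pYk (hu1 k)).conjTranspose_mul_mul_same (Ahat k)
      have incY : (Ahat k * Ys k * (1 + Xs k * Ys k)⁻¹ * (Ahat k)ᵀ).PosSemidef := by
        have e : Ahat k * Ys k * (1 + Xs k * Ys k)⁻¹ * (Ahat k)ᵀ
            = Ahat k * (Ys k * (1 + Xs k * Ys k)⁻¹) * (Ahat k)ᴴ := by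
          rw [Matrix.conjTranspose_eq_transpose_of_trivial, mul_assoc (Ahat k)]
        rw [e]
        exact (psd_mul_inv pYk pXk (hu2 k)).mul_mul_conjTranspose_same (Ahat k)
      refine ⟨?_, ?_, ?_, ?_, ?_, ?_⟩
      · rw [hXrec]; exact pXk.add incX
      · rw [hYrec]; exact pYk.add incY
      · rw [hArec, hYrec, hEk2]; exact s1
      · rw [hAt1, hFk2, hXrec,
          show (Ahat k)ᵀ * (1 + Xs k * Ys k)⁻¹ * Xs k * Ahat k
            = (Ahat k)ᵀ * Xs k * (1 + Ys k * Xs k)⁻¹ * ((Ahat k)ᵀ)ᵀ from by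
            rw [Matrix.transpose_transpose, mul_assoc ((Ahat k)ᵀ), hci]; noncomm_ring]
        exact t1
      · rw [hXrec, hArec, hEk2,
          show Ahat k * (1 + Ys k * Xs k)⁻¹ * Ahat k
            = ((Ahat k)ᵀ * (1 + Xs k * Ys k)⁻¹ * (Ahat k)ᵀ)ᵀ from by
            rw [Matrix.transpose_mul, Matrix.transpose_mul, hJt2,
              Matrix.transpose_transpose, ← mul_assoc]]
        exact s2
      · rw [hYrec, hArec, hFk2,
          show Ahat k * Ys k * (1 + Xs k * Ys k)⁻¹ * (Ahat k)ᵀ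
            = Ahat k * (1 + Ys k * Xs k)⁻¹ * Ys k * (Ahat k)ᵀ from by
            rw [mul_assoc (Ahat k), hci2, ← mul_assoc]]
        have h := t2
        rw [Matrix.transpose_transpose] at h
        exact h
  -- commutation identity
  have key : Rᵀ*(1+X*Y) = (1+X*Y)*S := by
    have e : Rᵀ*(1+X*Y) - (1+X*Y)*S
        = (Aᵀ*X + X*A + Q - X*G*X)*Y - X*(A*Y + Y*Aᵀ - Y*Q*Y + G) := by
      rw [hR, hS, Matrix.transpose_sub, Matrix.transpose_mul, hGs, hXsy]
      noncomm_ring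
    rw [hCARE, hDUAL, zero_mul, mul_zero, sub_zero] at e
    exact sub_eq_zero.mp e
  have hRtu : IsUnit (Rᵀ - α•1) := by
    have := iut hRu
    rwa [Matrix.transpose_sub, Matrix.transpose_smul, Matrix.transpose_one] at this
  have hCRt : CRᵀ = (Rᵀ - α•1)⁻¹*(Rᵀ + α•1) := by
    simp only [hCR, Matrix.transpose_mul, Matrix.transpose_nonsing_inv,
      Matrix.transpose_sub, Matrix.transpose_add, Matrix.transpose_smul,
      Matrix.transpose_one]
  have eq1 : (Rᵀ+α•1)*((1+X*Y)*(S-α•1)) = (Rᵀ-α•1)*((1+X*Y)*(S+α•1)) := by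
    set K := 1 + X*Y with hK
    simp only [mul_sub, mul_add, sub_mul, add_mul, smul_mul_assoc, mul_smul_comm,
      one_mul, mul_one]
    simp only [← mul_assoc]
    rw [show Rᵀ*K = K*S from by rw [hK]; exact key]
    module
  have ecomm : CRᵀ*(1+X*Y) = (1+X*Y)*CS := by
    rw [hCRt, hCS]
    have t1 := congrArg (fun Z => (Rᵀ-α•1)⁻¹ * Z * (S-α•1)⁻¹) eq1
    rw [ivcl hRtu] at t1
    rw [show (Rᵀ-α•1)⁻¹*((Rᵀ+α•1)*((1+X*Y)*(S-α•1)))*(S-α•1)⁻¹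
        = (Rᵀ-α•1)⁻¹*((Rᵀ+α•1)*(1+X*Y))*((S-α•1)*(S-α•1)⁻¹) from by noncomm_ring,
      miv hSu, mul_one] at t1
    rw [mul_assoc]
    rw [t1]
    noncomm_ring
  -- assemble the final statement
  intro k
  obtain ⟨pXk, pYk, i1, i3, i2, i4⟩ := inv k
  obtain ⟨pXk1, pYk1, i1', i3', i2', i4'⟩ := inv (k+1)
  have hXkt : (Xs k)ᵀ = Xs k := tps pXk.isHermitian
  have hYkt : (Ys k)ᵀ = Ys k := tps pYk.isHermitian
  have hXerr : X - Xs k = (CR^(2^k))ᵀ*(X + X*(Ys k)*X)*(CR^(2^k)) :=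
    errform hXsy hYkt i1 i2
  have hXerr1 : X - Xs (k+1) = (CR^(2^(k+1)))ᵀ*(X + X*(Ys (k+1))*X)*(CR^(2^(k+1))) :=
    errform hXsy (tps pYk1.isHermitian) i1' i2'
  have hYerr : Y - Ys k = (CS^(2^k))ᵀ*(Y + Y*(Xs k)*Y)*(CS^(2^k)) :=
    errform hYsy hXkt i3 (by rwa [Matrix.transpose_transpose])
  have pXe : (X - Xs k).PosSemidef := by
    rw [hXerr]
    exact conjpsd (hXpsd.add (sandwich hXsy pYk)) _
  have pXe1 : (X - Xs (k+1)).PosSemidef := by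
    rw [hXerr1]
    exact conjpsd (hXpsd.add (sandwich hXsy pYk1)) _
  have pYe : (Y - Ys k).PosSemidef := by
    rw [hYerr]
    exact conjpsd (hYpsd.add (sandwich hYsy pXk)) _
  have pInc : (Xs (k+1) - Xs k).PosSemidef := by
    rw [hXrec, add_sub_cancel_left]
    have e : (Ahat k)ᵀ * (1 + Xs k * Ys k)⁻¹ * Xs k * Ahat k
        = (Ahat k)ᴴ * (Xs k * (1 + Ys k * Xs k)⁻¹) * Ahat k := by
      rw [Matrix.conjTranspose_eq_transpose_of_trivial, mul_assoc ((Ahat k)ᵀ),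
        (comm_inv (hu1 k) (hu2 k)).symm]
    rw [e]
    exact (psd_mul_inv pXk pYk (hu1 k)).conjTranspose_mul_mul_same (Ahat k)
  have hbound : (1 + X * Y) * CS ^ (2 ^ k) * X * CR ^ (2 ^ k) - (X - Xs k)
      = (CR^(2^k))ᵀ*(X*(Y - Ys k)*X)*(CR^(2^k)) := by
    rw [hXerr, show (1 + X*Y) * CS^(2^k) = (CR^(2^k))ᵀ*(1+X*Y) from
      (pcomm ecomm (2^k)).symm]
    noncomm_ring
  refine ⟨pXk, pInc, pXe1, pXe, ?_⟩
  rw [hbound]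
  exact conjpsd (sandwich hXsy pYe) _
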